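/- Let $p > 1$, $q \in [1, p)$, $F \in L^p(\Omega; H)$, and $B \in \mathcal{E}$ with $\mu(B) < \infty$. Then $\mathbf{1}_{\Omega\times B}\, DF \in L^q(\Omega \times E; H)$ and there is a finite constant $C_B$ depending only on $B$, $\mu$, $p$, $q$ (but not on $F$) such that $\|\mathbf{1}_{\Omega\times B} DF\|_{L^q(\Omega\times E;H)} \le C_B \|F\|_{L^p(\Omega;H)}$. -/

import Mathlib

open MeasureTheory Filter
open scoped ENNReal RealInnerProductSpace

private lemma aux_add_one_pow (n : ℕ) (x : ℝ≥0∞) : (x + 1) ^ n ≤ 2 ^ n * (x ^ n + 1) := by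
  calc (x + 1) ^ n ≤ (2 * max x 1) ^ n := by
        gcongr
        rcases le_total x 1 with h | h
        · calc x + 1 ≤ 1 + 1 := by gcongr
            _ = 2 * 1 := by ring
            _ ≤ 2 * max x 1 := by gcongr; exact le_max_right _ _
        · calc x + 1 ≤ x + x := by gcongr
            _ = 2 * x := by ring
            _ ≤ 2 * max x 1 := by gcongr; exact le_max_left _ _
    _ = 2 ^ n * (max x 1) ^ n := mul_pow _ _ _
    _ ≤ 2 ^ n * (x ^ n + 1) := by
        gcongr
        rcases le_total x 1 with h | h
        · rw [max_eq_right h]; simp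
        · rw [max_eq_left h]; exact le_self_add

private lemma aux_rpow_le (x : ℝ≥0∞) {r : ℝ} (hr : 0 ≤ r) {n : ℕ} (hn : r ≤ n) :
    x ^ r ≤ x ^ n + 1 := by
  rcases le_total x 1 with h | h
  · exact (ENNReal.rpow_le_one h hr).trans (le_add_self : (1:ℝ≥0∞) ≤ x ^ n + 1)
  · calc x ^ r ≤ x ^ (n : ℝ) := ENNReal.rpow_le_rpow_of_exponent_le h hn
      _ = x ^ n := ENNReal.rpow_natCast x n
      _ ≤ x ^ n + 1 := le_self_add

/-- **Mecke's formula** (add-one form), characterizing Poisson random measures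
with σ-finite intensity `μ`. -/
def MeckeAdd {Ω E : Type*} [MeasurableSpace Ω] [MeasurableSpace E]
    (P : Measure Ω) (μ : Measure E) (N : Ω → Measure E) : Prop :=
  ∀ f : Measure E → E → ℝ≥0∞, Measurable (Function.uncurry f) →
    ∫⁻ ω, ∫⁻ x, f (N ω) x ∂(N ω) ∂P
      = ∫⁻ ω, ∫⁻ x, f (N ω + Measure.dirac x) x ∂μ ∂P

private lemma aux_moment_fin {Ω E : Type*} [MeasurableSpace Ω] [MeasurableSpace E]
    (P : Measure Ω) [IsProbabilityMeasure P] (μ : Measure E)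
    (N : Ω → Measure E) (hMecke : MeckeAdd P μ N) (hN : Measurable N)
    (B : Set E) (hB : MeasurableSet B) (hBfin : μ B < ∞) :
    ∀ n : ℕ, ∫⁻ ω, (N ω B) ^ n ∂P < ∞ := by
  have hNB : Measurable fun ω => N ω B := (Measure.measurable_coe hB).comp hN
  intro n
  induction n with
  | zero => simp
  | succ n ih =>
    have hkey : ∫⁻ ω, (N ω B) ^ (n + 1) ∂P = (∫⁻ ω, (N ω B + 1) ^ n ∂P) * μ B := by
      have hm : Measurable (Function.uncurry
          fun (ν : Measure E) (x : E) => B.indicator (fun _ => (ν B) ^ n) x) := by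
        have : (Function.uncurry
            fun (ν : Measure E) (x : E) => B.indicator (fun _ => (ν B) ^ n) x)
            = fun pr : Measure E × E => (pr.1 B) ^ n * B.indicator 1 pr.2 := by
          funext pr
          simp only [Function.uncurry, Set.indicator]
          split_ifs <;> simp
        rw [this]
        exact (((Measure.measurable_coe hB).comp measurable_fst).pow_const n).mul
          ((measurable_one.indicator hB).comp measurable_snd)
      have h := hMecke _ hm
      calc ∫⁻ ω, (N ω B) ^ (n + 1) ∂P
          = ∫⁻ ω, ∫⁻ x, B.indicator (fun _ => (N ω B) ^ n) x ∂(N ω) ∂P := by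
            refine lintegral_congr fun ω => ?_
            rw [lintegral_indicator hB, setLIntegral_const, pow_succ]
        _ = ∫⁻ ω, ∫⁻ x, B.indicator (fun _ => ((N ω + Measure.dirac x) B) ^ n) x ∂μ ∂P := h
        _ = ∫⁻ ω, (N ω B + 1) ^ n * μ B ∂P := by
            refine lintegral_congr fun ω => ?_
            have hpt : ∀ x : E, B.indicator (fun _ => ((N ω + Measure.dirac x) B) ^ n) x
                = B.indicator (fun _ => (N ω B + 1) ^ n) x := by
              intro x
              by_cases hx : x ∈ B
              · simp [Set.indicator_of_mem hx, Measure.add_apply,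
                  Measure.dirac_apply_of_mem hx]
              · simp [Set.indicator_of_notMem hx]
            rw [lintegral_congr hpt, lintegral_indicator hB, setLIntegral_const]
        _ = (∫⁻ ω, (N ω B + 1) ^ n ∂P) * μ B := lintegral_mul_const _ ((hNB.add_const 1).pow_const n)
    have hbd : ∫⁻ ω, (N ω B + 1) ^ n ∂P ≤ 2 ^ n * ((∫⁻ ω, (N ω B) ^ n ∂P) + 1) := by
      calc ∫⁻ ω, (N ω B + 1) ^ n ∂P ≤ ∫⁻ ω, 2 ^ n * ((N ω B) ^ n + 1) ∂P :=
            lintegral_mono fun ω => aux_add_one_pow n (N ω B)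
        _ = 2 ^ n * ((∫⁻ ω, (N ω B) ^ n ∂P) + 1) := by
            rw [lintegral_const_mul _ ((hNB.pow_const n).add_const 1)]
            congr 1
            rw [lintegral_add_right _ measurable_const]
            simp
    rw [hkey]
    refine ENNReal.mul_lt_top (hbd.trans_lt (ENNReal.mul_lt_top ?_ ?_)) hBfin
    · exact ENNReal.pow_lt_top (by norm_num)
    · exact ENNReal.add_lt_top.mpr ⟨ih, ENNReal.one_lt_top⟩

private lemma eLpNorm_eq_lintegral_rpow_nnnorm {α F : Type*} {m0 : MeasurableSpace α}
    [NormedAddCommGroup F] {p : ℝ≥0∞} {μ : Measure α} (hp0 : p ≠ 0) (hp : p ≠ ∞) {f : α → F} :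
    eLpNorm f p μ = (∫⁻ x, (‖f x‖₊ : ℝ≥0∞) ^ p.toReal ∂μ) ^ (1 / p.toReal) := by
  rw [eLpNorm_eq_lintegral_rpow_enorm_toReal hp0 hp]
  simp only [enorm_eq_nnnorm]

/-- **Local `L^q`-estimate for the difference operator.**  Let `p > 1`,
`q ∈ [1, p)` and let `B ∈ ℰ` have finite `μ`-measure.  There is a finite constant
`C = C_{B,μ,p,q}`, not depending on `F`, such that for every `F ∈ L^p(Ω;H)`
(with representative `f`) one has `𝟙_{Ω × B} DF ∈ L^q(Ω × E; H)` and
`‖𝟙_{Ω × B} DF‖_{L^q} ≤ C ‖F‖_{L^p}`, where `D_x F = f (N + δ_x) - F`. -/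
theorem local_Lq_estimate_D
    {Ω E H : Type*} [MeasurableSpace Ω] [MeasurableSpace E]
    [NormedAddCommGroup H] [InnerProductSpace ℝ H] [CompleteSpace H]
    [TopologicalSpace.SeparableSpace H]
    (P : Measure Ω) [IsProbabilityMeasure P] (μ : Measure E) [SigmaFinite μ]
    (N : Ω → Measure E) (hMecke : MeckeAdd P μ N) (hN : Measurable N)
    (B : Set E) (hB : MeasurableSet B) (hBfin : μ B < ∞)
    (p q : ℝ≥0∞) (hp : 1 < p) (hp' : p ≠ ∞) (hq : 1 ≤ q) (hqp : q < p) :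
    ∃ C : ℝ≥0∞, C < ∞ ∧
      ∀ (F : Ω → H) (f : Measure E → H), StronglyMeasurable f →
        (∀ᵐ ω ∂P, F ω = f (N ω)) → MemLp F p P →
        MemLp ((Set.univ ×ˢ B).indicator
            fun pr : Ω × E => f (N pr.1 + Measure.dirac pr.2) - F pr.1) q (P.prod μ) ∧
        eLpNorm ((Set.univ ×ˢ B).indicator
            fun pr : Ω × E => f (N pr.1 + Measure.dirac pr.2) - F pr.1) q (P.prod μ)
          ≤ C * eLpNorm F p P := by
  -- exponents
  have hq0 : q ≠ 0 := (zero_lt_one.trans_le hq).ne'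
  have hqtop : q ≠ ∞ := (hqp.trans (lt_top_iff_ne_top.mpr hp')).ne
  set qr := q.toReal with hqr_def
  set pr := p.toReal with hpr_def
  have hqr1 : 1 ≤ qr := by
    rw [← ENNReal.toReal_one]
    exact (ENNReal.toReal_le_toReal (by simp) hqtop).mpr hq
  have hqrpos : 0 < qr := zero_lt_one.trans_le hqr1
  have hqrlt : qr < pr := (ENNReal.toReal_lt_toReal hqtop hp').mpr hqp
  have hprpos : 0 < pr := hqrpos.trans hqrlt
  set r : ℝ := pr / qr with hr_def
  have hr1 : 1 < r := (one_lt_div hqrpos).mpr hqrlt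
  set r' : ℝ := Real.conjExponent r with hr'_def
  have hconj : r.HolderConjugate r' := Real.HolderConjugate.conjExponent hr1
  have hr'pos : 0 < r' := hconj.symm.pos
  have hqr_mul_r : qr * r = pr := by
    rw [hr_def, mul_comm, div_mul_cancel₀ _ hqrpos.ne']
  -- moments
  have hNB : Measurable fun ω => N ω B := (Measure.measurable_coe hB).comp hN
  set M : ℝ≥0∞ := ∫⁻ ω, (N ω B) ^ r' ∂P with hM_def
  have hM : M < ∞ := by
    calc M ≤ ∫⁻ ω, ((N ω B) ^ (⌈r'⌉₊ : ℕ) + 1) ∂P :=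
          lintegral_mono fun ω => aux_rpow_le _ hr'pos.le (Nat.le_ceil r')
      _ = (∫⁻ ω, (N ω B) ^ (⌈r'⌉₊ : ℕ) ∂P) + 1 := by
          rw [lintegral_add_right _ measurable_const]; simp
      _ < ∞ := ENNReal.add_lt_top.mpr
          ⟨aux_moment_fin P μ N hMecke hN B hB hBfin _, ENNReal.one_lt_top⟩
  set K : ℝ≥0∞ := M ^ (1 / r') with hK_def
  have hK : K < ∞ := ENNReal.rpow_lt_top_of_nonneg (by positivity) hM.ne
  refine ⟨K ^ (1 / qr) + (μ B) ^ (1 / qr), ?_, ?_⟩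
  · exact ENNReal.add_lt_top.mpr
      ⟨ENNReal.rpow_lt_top_of_nonneg (by positivity) hK.ne,
       ENNReal.rpow_lt_top_of_nonneg (by positivity) hBfin.ne⟩
  intro F f hf hFf hF
  -- measurability
  have hNd : Measurable fun pr : Ω × E => N pr.1 + Measure.dirac pr.2 := by
    refine Measure.measurable_of_measurable_coe _ fun s hs => ?_
    simp only [Measure.add_apply]
    exact ((Measure.measurable_coe hs).comp (hN.comp measurable_fst)).add
      ((Measure.measurable_coe hs).comp (Measure.measurable_dirac.comp measurable_snd))
  have hg1m : StronglyMeasurable fun pr : Ω × E => f (N pr.1 + Measure.dirac pr.2) :=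
    hf.comp_measurable hNd
  have hfN : StronglyMeasurable fun ω => f (N ω) := hf.comp_measurable hN
  have hFae : AEStronglyMeasurable F P := hfN.aestronglyMeasurable.congr (hFf.mono fun ω h => h.symm)
  have hF1 : AEStronglyMeasurable (fun pr : Ω × E => F pr.1) (P.prod μ) := hFae.comp_fst
  set s : Set (Ω × E) := Set.univ ×ˢ B with hs_def
  have hsm : MeasurableSet s := MeasurableSet.univ.prod hB
  have heqr : (P.prod μ).restrict s = P.prod (μ.restrict B) := by
    rw [hs_def, ← Measure.prod_restrict, Measure.restrict_univ]
  -- generic computation of the `q`-integral of an indicator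
  have hcomp : ∀ h : Ω × E → H, AEStronglyMeasurable h (P.prod μ) →
      ∫⁻ z, (‖s.indicator h z‖₊ : ℝ≥0∞) ^ qr ∂(P.prod μ)
        = ∫⁻ ω, ∫⁻ x in B, (‖h (ω, x)‖₊ : ℝ≥0∞) ^ qr ∂μ ∂P := by
    intro h hh
    have h1 : AEMeasurable (fun z => (‖h z‖₊ : ℝ≥0∞) ^ qr) (P.prod μ) :=
      ENNReal.continuous_rpow_const.measurable.comp_aemeasurable hh.enorm
    calc ∫⁻ z, (‖s.indicator h z‖₊ : ℝ≥0∞) ^ qr ∂(P.prod μ)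
        = ∫⁻ z, s.indicator (fun z => (‖h z‖₊ : ℝ≥0∞) ^ qr) z ∂(P.prod μ) := by
          refine lintegral_congr fun z => ?_
          by_cases hz : z ∈ s
          · simp [Set.indicator_of_mem hz]
          · simp [Set.indicator_of_notMem hz, ENNReal.zero_rpow_of_pos hqrpos]
      _ = ∫⁻ z in s, (‖h z‖₊ : ℝ≥0∞) ^ qr ∂(P.prod μ) := lintegral_indicator hsm _
      _ = ∫⁻ z, (‖h z‖₊ : ℝ≥0∞) ^ qr ∂(P.prod (μ.restrict B)) := by rw [← heqr]
      _ = ∫⁻ ω, ∫⁻ x in B, (‖h (ω, x)‖₊ : ℝ≥0∞) ^ qr ∂μ ∂P :=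
          lintegral_prod _ (by rw [← heqr]; exact h1.restrict)
  -- bound for the `F`-part
  have hg2le : eLpNorm (s.indicator fun z : Ω × E => F z.1) q (P.prod μ)
      ≤ (μ B) ^ (1 / qr) * eLpNorm F p P := by
    have hA : ∫⁻ z, (‖s.indicator (fun z : Ω × E => F z.1) z‖₊ : ℝ≥0∞) ^ qr ∂(P.prod μ)
        = μ B * ∫⁻ ω, (‖F ω‖₊ : ℝ≥0∞) ^ qr ∂P := by
      rw [hcomp _ hF1]
      calc ∫⁻ ω, ∫⁻ _ in B, (‖F ω‖₊ : ℝ≥0∞) ^ qr ∂μ ∂P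
          = ∫⁻ ω, (‖F ω‖₊ : ℝ≥0∞) ^ qr * μ B ∂P := by
            refine lintegral_congr fun ω => ?_; rw [setLIntegral_const]
        _ = (∫⁻ ω, (‖F ω‖₊ : ℝ≥0∞) ^ qr ∂P) * μ B := lintegral_mul_const'' _
            (ENNReal.continuous_rpow_const.measurable.comp_aemeasurable hFae.enorm)
        _ = μ B * ∫⁻ ω, (‖F ω‖₊ : ℝ≥0∞) ^ qr ∂P := mul_comm _ _
    rw [eLpNorm_eq_lintegral_rpow_nnnorm hq0 hqtop, hA,
      ENNReal.mul_rpow_of_nonneg _ _ (by positivity)]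
    refine mul_le_mul_right ?_ _
    rw [← eLpNorm_eq_lintegral_rpow_nnnorm hq0 hqtop]
    exact eLpNorm_le_eLpNorm_of_exponent_le hqp.le hFae
  -- Mecke's formula for the `f (N + δ)`-part
  have hΦm : Measurable fun ν : Measure E => (‖f ν‖₊ : ℝ≥0∞) ^ qr :=
    ENNReal.continuous_rpow_const.measurable.comp hf.enorm
  have hm2 : Measurable (Function.uncurry
      fun (ν : Measure E) (x : E) => B.indicator (fun _ => (‖f ν‖₊ : ℝ≥0∞) ^ qr) x) := by
    have : (Function.uncurry
        fun (ν : Measure E) (x : E) => B.indicator (fun _ => (‖f ν‖₊ : ℝ≥0∞) ^ qr) x)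
        = fun z : Measure E × E => (‖f z.1‖₊ : ℝ≥0∞) ^ qr * B.indicator 1 z.2 := by
      funext z
      simp only [Function.uncurry, Set.indicator]
      split_ifs <;> simp
    rw [this]
    exact (hΦm.comp measurable_fst).mul ((measurable_one.indicator hB).comp measurable_snd)
  have hMk := hMecke _ hm2
  have hB1 : ∫⁻ ω, ∫⁻ x in B, (‖f (N ω + Measure.dirac x)‖₊ : ℝ≥0∞) ^ qr ∂μ ∂P
      = ∫⁻ ω, (‖f (N ω)‖₊ : ℝ≥0∞) ^ qr * N ω B ∂P := by
    calc ∫⁻ ω, ∫⁻ x in B, (‖f (N ω + Measure.dirac x)‖₊ : ℝ≥0∞) ^ qr ∂μ ∂P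
        = ∫⁻ ω, ∫⁻ x, B.indicator
            (fun _ => (‖f (N ω + Measure.dirac x)‖₊ : ℝ≥0∞) ^ qr) x ∂μ ∂P := by
          refine lintegral_congr fun ω => ?_
          rw [← lintegral_indicator hB]
          refine lintegral_congr fun x => ?_
          by_cases hx : x ∈ B <;> simp [hx]
      _ = ∫⁻ ω, ∫⁻ x, B.indicator (fun _ => (‖f (N ω)‖₊ : ℝ≥0∞) ^ qr) x ∂(N ω) ∂P := hMk.symm
      _ = ∫⁻ ω, (‖f (N ω)‖₊ : ℝ≥0∞) ^ qr * N ω B ∂P := by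
          refine lintegral_congr fun ω => ?_
          rw [lintegral_indicator hB, setLIntegral_const]
  -- Hölder
  have hHold : ∫⁻ ω, (‖f (N ω)‖₊ : ℝ≥0∞) ^ qr * N ω B ∂P
      ≤ K * (eLpNorm F p P) ^ qr := by
    have hFp : eLpNorm F p P = (∫⁻ ω, (‖f (N ω)‖₊ : ℝ≥0∞) ^ pr ∂P) ^ (1 / pr) := by
      rw [eLpNorm_congr_ae hFf, eLpNorm_eq_lintegral_rpow_nnnorm
        (by positivity) hp']
    calc ∫⁻ ω, (‖f (N ω)‖₊ : ℝ≥0∞) ^ qr * N ω B ∂P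
        = ∫⁻ ω, N ω B * (‖f (N ω)‖₊ : ℝ≥0∞) ^ qr ∂P :=
          lintegral_congr fun ω => mul_comm _ _
      _ ≤ (∫⁻ ω, (N ω B) ^ r' ∂P) ^ (1 / r')
            * (∫⁻ ω, ((‖f (N ω)‖₊ : ℝ≥0∞) ^ qr) ^ r ∂P) ^ (1 / r) :=
          ENNReal.lintegral_mul_le_Lp_mul_Lq P hconj.symm hNB.aemeasurable
            (hΦm.comp hN).aemeasurable
      _ = K * (eLpNorm F p P) ^ qr := by
          rw [← hM_def, ← hK_def]
          congr 1
          have h2 : ∀ ω, ((‖f (N ω)‖₊ : ℝ≥0∞) ^ qr) ^ r = (‖f (N ω)‖₊ : ℝ≥0∞) ^ pr := by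
            intro ω; rw [← ENNReal.rpow_mul, hqr_mul_r]
          rw [lintegral_congr h2, hFp, ← ENNReal.rpow_mul]
          congr 1
          rw [hr_def]
          field_simp
  have hg1le : eLpNorm (s.indicator fun z : Ω × E => f (N z.1 + Measure.dirac z.2)) q (P.prod μ)
      ≤ K ^ (1 / qr) * eLpNorm F p P := by
    rw [eLpNorm_eq_lintegral_rpow_nnnorm hq0 hqtop,
      hcomp _ hg1m.aestronglyMeasurable, hB1]
    calc (∫⁻ ω, (‖f (N ω)‖₊ : ℝ≥0∞) ^ qr * N ω B ∂P) ^ (1 / qr)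
        ≤ (K * (eLpNorm F p P) ^ qr) ^ (1 / qr) :=
          ENNReal.rpow_le_rpow hHold (by positivity)
      _ = K ^ (1 / qr) * eLpNorm F p P := by
          rw [ENNReal.mul_rpow_of_nonneg _ _ (by positivity)]
          congr 1
          rw [← ENNReal.rpow_mul, mul_one_div_cancel hqrpos.ne', ENNReal.rpow_one]
  -- combine
  have hsplit : (s.indicator fun z : Ω × E => f (N z.1 + Measure.dirac z.2) - F z.1)
      = (s.indicator fun z : Ω × E => f (N z.1 + Measure.dirac z.2))
        - (s.indicator fun z : Ω × E => F z.1) := by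
    funext z
    by_cases hz : z ∈ s <;>
      simp [Set.indicator_of_mem, Set.indicator_of_notMem, hz, Pi.sub_apply]
  have hg1ae : AEStronglyMeasurable
      (s.indicator fun z : Ω × E => f (N z.1 + Measure.dirac z.2)) (P.prod μ) :=
    hg1m.aestronglyMeasurable.indicator hsm
  have hg2ae : AEStronglyMeasurable (s.indicator fun z : Ω × E => F z.1) (P.prod μ) :=
    hF1.indicator hsm
  have hle : eLpNorm (s.indicator fun z : Ω × E => f (N z.1 + Measure.dirac z.2) - F z.1) q
      (P.prod μ) ≤ (K ^ (1 / qr) + (μ B) ^ (1 / qr)) * eLpNorm F p P := by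
    rw [hsplit, add_mul]
    exact (eLpNorm_sub_le hg1ae hg2ae hq).trans (add_le_add hg1le hg2le)
  have hgae : AEStronglyMeasurable
      (s.indicator fun z : Ω × E => f (N z.1 + Measure.dirac z.2) - F z.1) (P.prod μ) :=
    (hg1m.aestronglyMeasurable.sub hF1).indicator hsm
  refine ⟨⟨hgae, hle.trans_lt (ENNReal.mul_lt_top ?_ hF.2)⟩, hle⟩
  exact ENNReal.add_lt_top.mpr
    ⟨ENNReal.rpow_lt_top_of_nonneg (by positivity) hK.ne,
     ENNReal.rpow_lt_top_of_nonneg (by positivity) hBfin.ne⟩
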